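/- For every m > 0, the limit of s_m(r) − log(2r) as r → ∞ exists and is a finite real number. -/

import Mathlib

open MeasureTheory

/-- The arclength function `s_m(r) = ∫_{r₀}^{r} (1 + t² − 2m/t)^{−1/2} dt`, the
`g_m`-distance from the coordinate sphere `S_r` to the boundary sphere `S_{r₀}` in the
Schwarzschild anti-de Sitter space of mass `m`. -/
noncomputable def sm (m r₀ r : ℝ) : ℝ :=
  ∫ t in Set.Ioc r₀ r, (Real.sqrt (1 + t ^ 2 - 2 * m / t))⁻¹

/-- For every `m > 0`, the limit of `s_m(r) − log(2r)` as `r → ∞` exists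
and is a finite real number.  Here `r₀` is the unique positive real with
`r₀³ + r₀ = 2m`. -/
theorem penrose_stmt9 (m r₀ : ℝ) (hm : 0 < m) (hr₀ : 0 < r₀)
    (hroot : r₀ ^ 3 + r₀ = 2 * m) :
    ∃ L : ℝ, Filter.Tendsto (fun r => sm m r₀ r - Real.log (2 * r))
      Filter.atTop (nhds L) := by
  classical
  set f : ℝ → ℝ := fun t => (Real.sqrt (1 + t ^ 2 - 2 * m / t))⁻¹ with hfdef
  have hsm : ∀ r : ℝ, sm m r₀ r = ∫ t in Set.Ioc r₀ r, f t := fun r => rfl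
  have hfac : ∀ t : ℝ, t ^ 3 + t - 2 * m
      = (t - r₀) * (t ^ 2 + r₀ * t + (r₀ ^ 2 + 1)) := by
    intro t; linear_combination hroot
  have hXpos : ∀ t : ℝ, r₀ < t → 0 < 1 + t ^ 2 - 2 * m / t := by
    intro t ht
    have ht0 : 0 < t := hr₀.trans ht
    have h1 : 1 + t ^ 2 - 2 * m / t = (t ^ 3 + t - 2 * m) / t := by
      field_simp; ring
    rw [h1, hfac]
    apply div_pos _ ht0
    apply mul_pos (by linarith)
    nlinarith [mul_pos ht0 hr₀, sq_nonneg t, sq_nonneg r₀]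
  have hmeas : Measurable f := by fun_prop
  have hfnonneg : ∀ t : ℝ, 0 ≤ f t := by
    intro t
    exact inv_nonneg.mpr (Real.sqrt_nonneg _)
  -- integrability on Ioc r₀ r for every r
  have hInt : ∀ r : ℝ, IntegrableOn f (Set.Ioc r₀ r) := by
    intro r
    rcases le_or_gt r r₀ with h | h
    · rw [Set.Ioc_eq_empty (not_lt.mpr h)]
      exact integrableOn_empty
    · set c : ℝ := (r₀ ^ 2 + 1) / r with hc
      have hr0 : 0 < r := hr₀.trans h
      have hc0 : 0 < c := div_pos (by positivity) hr0
      have hmaj0 : IntegrableOn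
          (fun t : ℝ => (t - r₀) ^ (-(1 / 2) : ℝ)) (Set.Ioc r₀ r) := by
        rw [← intervalIntegrable_iff_integrableOn_Ioc_of_le h.le]
        have h2 := (intervalIntegral.intervalIntegrable_rpow'
          (a := 0) (b := r - r₀) (r := (-(1 / 2) : ℝ)) (by norm_num)).comp_sub_right r₀
        simpa using h2
      have hmaj : IntegrableOn
          (fun t => (t - r₀) ^ (-(1 / 2) : ℝ) * (Real.sqrt c)⁻¹) (Set.Ioc r₀ r) :=
        hmaj0.mul_const _
      refine Integrable.mono hmaj hmeas.aestronglyMeasurable ?_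
      filter_upwards [ae_restrict_mem measurableSet_Ioc] with t ht
      obtain ⟨ht1, ht2⟩ := ht
      have ht0 : 0 < t := hr₀.trans ht1
      have htr : 0 < t - r₀ := sub_pos.mpr ht1
      have hXt : 0 < 1 + t ^ 2 - 2 * m / t := hXpos t ht1
      have hlow : (t - r₀) * c ≤ 1 + t ^ 2 - 2 * m / t := by
        have h1 : 1 + t ^ 2 - 2 * m / t
            = (t - r₀) * ((t ^ 2 + r₀ * t + (r₀ ^ 2 + 1)) / t) := by
          rw [mul_div_assoc', ← hfac]; field_simp; ring
        rw [h1, hc]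
        apply mul_le_mul_of_nonneg_left _ htr.le
        rw [div_le_div_iff₀ hr0 ht0]
        have e1 : (r₀ ^ 2 + 1) * t ≤ (r₀ ^ 2 + 1) * r :=
          mul_le_mul_of_nonneg_left ht2 (by positivity)
        nlinarith [mul_nonneg (mul_nonneg ht0.le ht0.le) hr0.le,
          mul_nonneg (mul_nonneg hr₀.le ht0.le) hr0.le]
      have hs0 : 0 < Real.sqrt ((t - r₀) * c) :=
        Real.sqrt_pos.mpr (mul_pos htr hc0)
      have hs1 : Real.sqrt ((t - r₀) * c) ≤ Real.sqrt (1 + t ^ 2 - 2 * m / t) :=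
        Real.sqrt_le_sqrt hlow
      have hb : f t ≤ (Real.sqrt ((t - r₀) * c))⁻¹ := by
        simp only [hfdef]
        gcongr
      have heq : (Real.sqrt ((t - r₀) * c))⁻¹
          = (t - r₀) ^ (-(1 / 2) : ℝ) * (Real.sqrt c)⁻¹ := by
        rw [Real.sqrt_mul htr.le, mul_inv, Real.sqrt_eq_rpow, ← Real.rpow_neg htr.le]
      rw [Real.norm_eq_abs, Real.norm_eq_abs, abs_of_nonneg (hfnonneg t),
        abs_of_nonneg (by positivity)]
      rw [← heq]
      exact hb
  -- additivity of sm
  have hsplit : ∀ a b : ℝ, r₀ ≤ a → a ≤ b →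
      sm m r₀ b = sm m r₀ a + ∫ t in Set.Ioc a b, f t := by
    intro a b ha hab
    rw [hsm, hsm, ← Set.Ioc_union_Ioc_eq_Ioc ha hab,
      setIntegral_union (Set.Ioc_disjoint_Ioc_of_le le_rfl) measurableSet_Ioc (hInt a)
        ((hInt b).mono_set (Set.Ioc_subset_Ioc_left ha))]
  set R : ℝ := max 1 (max r₀ (2 * m)) with hR
  have hR1 : (1 : ℝ) ≤ R := le_max_left _ _
  have hRr₀ : r₀ ≤ R := (le_max_left _ _).trans (le_max_right _ _)
  have hRm : 2 * m ≤ R := (le_max_right _ _).trans (le_max_right _ _)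
  -- antitone step
  have hanti : ∀ a b : ℝ, R ≤ a → a ≤ b →
      sm m r₀ b - Real.log (2 * b) ≤ sm m r₀ a - Real.log (2 * a) := by
    intro a b haR hab
    have ha0 : 0 < a := lt_of_lt_of_le one_pos (hR1.trans haR)
    have hb0 : 0 < b := ha0.trans_le hab
    have hIab : IntegrableOn f (Set.Ioc a b) :=
      (hInt b).mono_set (Set.Ioc_subset_Ioc_left (hRr₀.trans haR))
    have hinv : IntegrableOn (fun t : ℝ => t⁻¹) (Set.Ioc a b) := by
      rw [← intervalIntegrable_iff_integrableOn_Ioc_of_le hab]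
      apply intervalIntegral.intervalIntegrable_inv (f := fun x : ℝ => x)
      · intro x hx
        have := (Set.uIcc_of_le hab ▸ hx).1
        exact (lt_of_lt_of_le ha0 this).ne'
      · exact continuousOn_id
    have hmono : (∫ t in Set.Ioc a b, f t) ≤ ∫ t in Set.Ioc a b, t⁻¹ := by
      apply setIntegral_mono_on hIab hinv measurableSet_Ioc
      intro t ht
      have ht0 : 0 < t := ha0.trans ht.1
      have hXt : 0 < 1 + t ^ 2 - 2 * m / t :=
        hXpos t (lt_of_le_of_lt (hRr₀.trans haR) ht.1)
      have h2m : 2 * m / t ≤ 1 := by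
        rw [div_le_one ht0]
        linarith [ht.1, haR, hRm]
      have hts : t ≤ Real.sqrt (1 + t ^ 2 - 2 * m / t) :=
        Real.le_sqrt_of_sq_le (by linarith)
      show f t ≤ t⁻¹
      simp only [hfdef]
      exact inv_anti₀ ht0 hts
    have hint_inv : (∫ t in Set.Ioc a b, (t : ℝ)⁻¹) = Real.log b - Real.log a := by
      rw [← intervalIntegral.integral_of_le hab, integral_inv_of_pos ha0 hb0,
        Real.log_div hb0.ne' ha0.ne']
    have hlogs : Real.log (2 * b) - Real.log (2 * a) = Real.log b - Real.log a := by
      rw [Real.log_mul two_ne_zero hb0.ne', Real.log_mul two_ne_zero ha0.ne']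
      ring
    have := hsplit a b (hRr₀.trans haR) hab
    linarith
  -- lower bound
  have hlb : ∀ r : ℝ, R ≤ r →
      -(Real.log (1 + r₀) + Real.log 2) ≤ sm m r₀ r - Real.log (2 * r) := by
    intro r hRr
    have hr0 : 0 < r := lt_of_lt_of_le one_pos (hR1.trans hRr)
    have hr₀r : r₀ ≤ r := hRr₀.trans hRr
    have hint1 : IntegrableOn (fun t : ℝ => (1 + t)⁻¹) (Set.Ioc r₀ r) := by
      rw [← intervalIntegrable_iff_integrableOn_Ioc_of_le hr₀r]
      apply intervalIntegral.intervalIntegrable_inv (f := fun x : ℝ => 1 + x)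
      · intro x hx
        have := (Set.uIcc_of_le hr₀r ▸ hx).1
        have : 0 < 1 + x := by linarith
        exact this.ne'
      · exact continuousOn_const.add continuousOn_id
    have h1 : (∫ t in Set.Ioc r₀ r, (1 + t)⁻¹) ≤ sm m r₀ r := by
      rw [hsm r]
      apply setIntegral_mono_on hint1 (hInt r) measurableSet_Ioc
      intro t ht
      have ht0 : 0 < t := hr₀.trans ht.1
      have hXt : 0 < 1 + t ^ 2 - 2 * m / t := hXpos t ht.1
      have hs : Real.sqrt (1 + t ^ 2 - 2 * m / t) ≤ 1 + t := by
        rw [show (1 + t) = Real.sqrt ((1 + t) ^ 2) from (Real.sqrt_sq (by linarith)).symm]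
        apply Real.sqrt_le_sqrt
        have h2m : 0 ≤ 2 * m / t := by positivity
        nlinarith
      show (1 + t)⁻¹ ≤ f t
      simp only [hfdef]
      exact inv_anti₀ (Real.sqrt_pos.mpr hXt) hs
    have h2 : (∫ t in Set.Ioc r₀ r, (1 + t)⁻¹)
        = Real.log (1 + r) - Real.log (1 + r₀) := by
      rw [← intervalIntegral.integral_of_le hr₀r]
      have hcomm : ∀ t : ℝ, (1 + t)⁻¹ = (t + 1)⁻¹ := fun t => by rw [add_comm]
      simp_rw [hcomm]
      rw [intervalIntegral.integral_comp_add_right (fun x : ℝ => x⁻¹) 1,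
        integral_inv_of_pos (by linarith) (by linarith),
        Real.log_div (by linarith) (by linarith), add_comm r 1, add_comm r₀ 1]
    have h3 : Real.log r ≤ Real.log (1 + r) :=
      Real.log_le_log hr0 (by linarith)
    have h4 : Real.log (2 * r) = Real.log 2 + Real.log r :=
      Real.log_mul two_ne_zero hr0.ne'
    linarith
  -- conclude via monotone convergence
  set F : ℝ → ℝ := fun r => sm m r₀ r - Real.log (2 * r) with hF
  have hGanti : Antitone fun r => F (max r R) := by
    intro x y hxy
    exact hanti (max x R) (max y R) (le_max_right _ _) (max_le_max hxy le_rfl)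
  have hGbdd : BddBelow (Set.range fun r => F (max r R)) := by
    refine ⟨-(Real.log (1 + r₀) + Real.log 2), ?_⟩
    rintro _ ⟨x, rfl⟩
    exact hlb _ (le_max_right _ _)
  refine ⟨_, (tendsto_atTop_ciInf hGanti hGbdd).congr' ?_⟩
  filter_upwards [Filter.eventually_ge_atTop R] with x hx
  rw [max_eq_left hx]
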